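/- Under the decentralized-memory setup, for every k ∈ {0, 1,…, n(d−1)/6 − 1} and every τ with 0 ≤ τ < (k+1)·τ_com, the following inclusion holds, where p = ⌊3k/n⌋ and q = k mod (n/3): mem_i(τ) ⊆ K_{2p+2} if i ∈ V_1 or (i ∈ V_3 and i ≤ 2n/3 + q + 1), and mem_i(τ) ⊆ K_{2p+1} if i ∈ V_2 or (i ∈ V_3 and i > 2n/3 + q + 1). -/

import Mathlib

open scoped BigOperators RealInnerProductSpace Classical

noncomputable section

/-- The `k`-th standard basis vector of `ℝ^d`, `0`-indexed (so the paper's `e_k` is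
`stdBasis d (k-1)`); out-of-range indices give `0`. -/
def stdBasis (d j : ℕ) : EuclideanSpace ℝ (Fin d) :=
  if h : j < d then EuclideanSpace.single ⟨j, h⟩ 1 else 0

/-- The subgradient oracle `∇̂h_j` (paper's `1`-indexed `j`, so `e_{j+1} = stdBasis d j`
and `e_j = stdBasis d (j-1)`). -/
def gradh (d j : ℕ) (x : EuclideanSpace ℝ (Fin d)) : EuclideanSpace ℝ (Fin d) :=
  if ⟪stdBasis d (j - 1), x⟫ < ⟪stdBasis d j, x⟫ then stdBasis d j - stdBasis d (j - 1)
  else if ⟪stdBasis d j, x⟫ < ⟪stdBasis d (j - 1), x⟫ then stdBasis d (j - 1) - stdBasis d j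
  else 0

/-- `K_j = span{e_1, …, e_j}`. -/
def Ksub (d j : ℕ) : Submodule ℝ (EuclideanSpace ℝ (Fin d)) :=
  Submodule.span ℝ {v | ∃ i < j, v = stdBasis d i}

/-- The subgradient oracle `∇̂f_i` (nodes `i` are `1`-indexed, `i ∈ {1,…,n}`). -/
def oracle (d n : ℕ) (a : ℝ) (i : ℕ) (x : EuclideanSpace ℝ (Fin d)) :
    EuclideanSpace ℝ (Fin d) :=
  if i ≤ n / 3 then
    a • (∑ j ∈ Finset.Icc 1 ((d - 1) / 2), gradh d (2 * j - 1) x) - a • stdBasis d 0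
  else if i ≤ 2 * n / 3 then
    a • ∑ j ∈ Finset.Icc 1 ((d - 1) / 2), gradh d (2 * j) x
  else 0

/-- The time-varying center node `i_c(τ) = 2n/3 + 1 + (⌊τ/τ_com⌋ mod (n/3))`. -/
def center (n : ℕ) (τcom τ : ℝ) : ℕ := 2 * n / 3 + 1 + (⌊τ / τcom⌋₊ % (n / 3))

/-- The set of `j` such that `(j, i) ∈ E(τ)` for the star graph with center `i_c(τ)`. -/
def inEdges (n : ℕ) (τcom τ : ℝ) (i : ℕ) : Set ℕ :=
  {j | 1 ≤ j ∧ j ≤ n ∧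
    ((j = center n τcom τ ∧ i ≠ center n τcom τ) ∨
     (i = center n τcom τ ∧ j ≠ center n τcom τ))}

/-- `memloc_i(τ)`: memory obtainable by a local subgradient computation. -/
def memloc (d : ℕ) (τsub : ℝ)
    (gfun : ℕ → EuclideanSpace ℝ (Fin d) → EuclideanSpace ℝ (Fin d))
    (mem : ℕ → ℝ → Set (EuclideanSpace ℝ (Fin d))) (i : ℕ) (τ : ℝ) :
    Set (EuclideanSpace ℝ (Fin d)) :=
  if τsub ≤ τ then
    ↑(Submodule.span ℝ (mem i (τ - τsub) ∪ (gfun i '' mem i (τ - τsub))))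
  else ∅

/-- `memcom_i(τ)`: memory obtainable by decentralized communication. -/
def memcom (d n : ℕ) (τcom : ℝ)
    (mem : ℕ → ℝ → Set (EuclideanSpace ℝ (Fin d))) (i : ℕ) (τ : ℝ) :
    Set (EuclideanSpace ℝ (Fin d)) :=
  if τcom ≤ τ then
    ↑(Submodule.span ℝ (⋃ j ∈ inEdges n τcom τ i, mem j (τ - τcom)))
  else ∅

/- ==================== auxiliary lemmas ==================== -/

theorem div_lt_div_of_mod' {n3 t k : ℕ} (htk : t ≤ k) (h : k % n3 < t % n3) :
    t / n3 < k / n3 := by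
  have h4 : t / n3 ≤ k / n3 := Nat.div_le_div_right htk
  rcases Nat.lt_or_ge (t / n3) (k / n3) with h5 | h5
  · exact h5
  · have heq : t / n3 = k / n3 := le_antisymm h4 h5
    have h1 := Nat.div_add_mod t n3
    have h2 := Nat.div_add_mod k n3
    rw [heq] at h1
    omega

theorem divmod_eq' {n3 q r : ℕ} (h3 : 0 < n3) (hr : r < n3) :
    (r + n3 * q) / n3 = q ∧ (r + n3 * q) % n3 = r := by
  constructor
  · rw [Nat.add_mul_div_left _ _ h3, Nat.div_eq_of_lt hr, Nat.zero_add]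
  · rw [Nat.add_mul_mod_self_left, Nat.mod_eq_of_lt hr]

theorem pred_div_zero' {n3 t : ℕ} (h3 : 0 < n3) (ht : 1 ≤ t) (h0 : t % n3 = 0) :
    (t - 1) / n3 + 1 = t / n3 ∧ 1 ≤ t / n3 := by
  have h1 := Nat.div_add_mod t n3
  rw [h0, Nat.add_zero] at h1
  have hs : 1 ≤ t / n3 := by
    rcases Nat.eq_zero_or_pos (t / n3) with h | h
    · rw [h, Nat.mul_zero] at h1; omega
    · exact h
  obtain ⟨s', hs'⟩ : ∃ s', t / n3 = s' + 1 := ⟨t / n3 - 1, by omega⟩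
  rw [hs', Nat.mul_succ] at h1
  have ht1 : t - 1 = (n3 - 1) + n3 * s' := by omega
  rw [ht1, (divmod_eq' h3 (by omega)).1, hs']
  omega

theorem pred_div_pos' {n3 t : ℕ} (h3 : 0 < n3) (h0 : t % n3 ≠ 0) :
    (t - 1) / n3 = t / n3 ∧ (t - 1) % n3 + 1 = t % n3 := by
  have h1 := Nat.div_add_mod t n3
  have h2 : t % n3 < n3 := Nat.mod_lt _ h3
  have ht1 : t - 1 = (t % n3 - 1) + n3 * (t / n3) := by omega
  rw [ht1, (divmod_eq' h3 (by omega)).1, (divmod_eq' h3 (by omega)).2]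
  omega

lemma Ksub_mono (d : ℕ) {j j' : ℕ} (h : j ≤ j') : Ksub d j ≤ Ksub d j' :=
  Submodule.span_mono (fun v hv => by
    obtain ⟨i, hi, rfl⟩ := hv; exact ⟨i, lt_of_lt_of_le hi h, rfl⟩)

lemma stdBasis_mem (d : ℕ) {i j : ℕ} (h : i < j) : stdBasis d i ∈ Ksub d j :=
  Submodule.subset_span ⟨i, h, rfl⟩

lemma inner_stdBasis_zero {d m j : ℕ} {x : EuclideanSpace ℝ (Fin d)}
    (hx : x ∈ Ksub d m) (hj : m ≤ j) : ⟪stdBasis d j, x⟫ = 0 := by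
  induction hx using Submodule.span_induction with
  | mem v hv =>
    obtain ⟨i, hi, rfl⟩ := hv
    have hz : ∀ y : EuclideanSpace ℝ (Fin d), ⟪(0 : EuclideanSpace ℝ (Fin d)), y⟫ = 0 :=
      fun y => inner_zero_left y
    unfold stdBasis
    split_ifs with h1 h2
    · rw [EuclideanSpace.inner_single_left]
      simp only [EuclideanSpace.single_apply]
      have : ¬ ((⟨j, h1⟩ : Fin d) = ⟨i, h2⟩) := by simp [Fin.ext_iff]; omega
      simp [this]
    · simp
    · exact hz _
    · exact hz _
  | zero => simp
  | add x y hx hy ihx ihy => rw [inner_add_right, ihx, ihy, add_zero]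
  | smul a x hx ih => rw [real_inner_smul_right, ih, mul_zero]

lemma gradh_mem {d : ℕ} (j : ℕ) (x : EuclideanSpace ℝ (Fin d)) :
    gradh d j x ∈ Ksub d (j + 1) := by
  unfold gradh
  split_ifs
  · exact Submodule.sub_mem _ (stdBasis_mem d (by omega)) (stdBasis_mem d (by omega))
  · exact Submodule.sub_mem _ (stdBasis_mem d (by omega)) (stdBasis_mem d (by omega))
  · exact Submodule.zero_mem _

lemma gradh_eq_zero {d m j : ℕ} {x : EuclideanSpace ℝ (Fin d)}
    (hx : x ∈ Ksub d m) (hj : m + 1 ≤ j) : gradh d j x = 0 := by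
  unfold gradh
  rw [inner_stdBasis_zero hx (by omega), inner_stdBasis_zero hx (by omega)]
  simp

lemma oracle_mem_V1 {d n : ℕ} {a : ℝ} {i p : ℕ} (hi : i ≤ n / 3)
    {x : EuclideanSpace ℝ (Fin d)} (hx : x ∈ Ksub d (2 * p + 2)) :
    oracle d n a i x ∈ Ksub d (2 * p + 2) := by
  unfold oracle
  rw [if_pos hi]
  refine Submodule.sub_mem _ (Submodule.smul_mem _ _ (Submodule.sum_mem _ fun j hj => ?_))
    (Submodule.smul_mem _ _ (stdBasis_mem d (by omega)))
  rw [Finset.mem_Icc] at hj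
  rcases le_or_gt j (p + 1) with h | h
  · exact Ksub_mono d (by omega) (gradh_mem (2 * j - 1) x)
  · rw [gradh_eq_zero hx (by omega)]; exact Submodule.zero_mem _

lemma oracle_mem_V2 {d n : ℕ} {a : ℝ} {i p : ℕ} (hi1 : ¬ i ≤ n / 3) (hi2 : i ≤ 2 * n / 3)
    {x : EuclideanSpace ℝ (Fin d)} (hx : x ∈ Ksub d (2 * p + 1)) :
    oracle d n a i x ∈ Ksub d (2 * p + 1) := by
  unfold oracle
  rw [if_neg hi1, if_pos hi2]
  refine Submodule.smul_mem _ _ (Submodule.sum_mem _ fun j hj => ?_)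
  rw [Finset.mem_Icc] at hj
  rcases le_or_gt j p with h | h
  · exact Ksub_mono d (by omega) (gradh_mem (2 * j) x)
  · rw [gradh_eq_zero hx (by omega)]; exact Submodule.zero_mem _

/-- The class of node `i` at round `k`. -/
def cls (n k i : ℕ) : ℕ :=
  if i ≤ n / 3 ∨ (2 * n / 3 < i ∧ i ≤ 2 * n / 3 + k % (n / 3) + 1)
  then 2 * (3 * k / n) + 2 else 2 * (3 * k / n) + 1

lemma cls_edge {n k t i j : ℕ} (hn : 3 ≤ n) (hn3 : 3 ∣ n) (ht1 : 1 ≤ t) (htk : t ≤ k)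
    (hedge : (j = 2 * n / 3 + 1 + t % (n / 3) ∧ i ≠ 2 * n / 3 + 1 + t % (n / 3)) ∨
             (i = 2 * n / 3 + 1 + t % (n / 3) ∧ j ≠ 2 * n / 3 + 1 + t % (n / 3))) :
    cls n (t - 1) j ≤ cls n k i := by
  obtain ⟨n3, rfl⟩ := hn3
  have h3 : 0 < n3 := by omega
  have e1 : 3 * n3 / 3 = n3 := by omega
  have e2 : 2 * (3 * n3) / 3 = 2 * n3 := by omega
  have e3 : 3 * (t - 1) / (3 * n3) = (t - 1) / n3 := Nat.mul_div_mul_left _ _ (by norm_num)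
  have e4 : 3 * k / (3 * n3) = k / n3 := Nat.mul_div_mul_left _ _ (by norm_num)
  have F1 : (t - 1) / n3 ≤ k / n3 := Nat.div_le_div_right (by omega)
  have F2 : t / n3 ≤ k / n3 := Nat.div_le_div_right htk
  have F0 : (t - 1) / n3 ≤ t / n3 := Nat.div_le_div_right (by omega)
  have Fq : k % n3 < n3 := Nat.mod_lt _ h3
  have Frt : t % n3 < n3 := Nat.mod_lt _ h3
  have Frt' : (t - 1) % n3 < n3 := Nat.mod_lt _ h3
  have F5 : k % n3 < t % n3 → t / n3 < k / n3 := fun h => div_lt_div_of_mod' htk h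
  have G : (t % n3 = 0 ∧ (t - 1) / n3 + 1 = t / n3 ∧ 1 ≤ t / n3) ∨
      (t % n3 ≠ 0 ∧ (t - 1) / n3 = t / n3 ∧ (t - 1) % n3 + 1 = t % n3) := by
    rcases Nat.eq_zero_or_pos (t % n3) with h0 | h0
    · exact Or.inl ⟨h0, pred_div_zero' h3 ht1 h0⟩
    · exact Or.inr ⟨by omega, pred_div_pos' h3 (by omega)⟩
  unfold cls
  simp only [e1, e2, e3, e4] at hedge ⊢
  split_ifs <;> omega
lemma main_lemma (d n : ℕ) (hn : 3 ≤ n) (hn3 : 3 ∣ n)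
    (a τcom τsub : ℝ) (hcom : 0 < τcom) (hsub : 0 < τsub)
    (mem : ℕ → ℝ → Set (EuclideanSpace ℝ (Fin d)))
    (hmem : ∀ i τ, 0 ≤ τ →
      mem i τ ⊆ {0} ∪ memloc d τsub (oracle d n a) mem i τ ∪ memcom d n τcom mem i τ) :
    ∀ N : ℕ, ∀ k : ℕ, ∀ τ : ℝ, 0 ≤ τ → τ < ((k : ℝ) + 1) * τcom →
      ⌊τ / min τcom τsub⌋₊ ≤ N →
      ∀ i, 1 ≤ i → i ≤ n → mem i τ ⊆ ↑(Ksub d (cls n k i)) := by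
  have hm : (0 : ℝ) < min τcom τsub := lt_min hcom hsub
  intro N
  induction N with
  | zero =>
    intro k τ hτ0 hτk hfl i hi1 hin x hx
    have hτm : τ < min τcom τsub := by
      by_contra hc
      have : 1 ≤ ⌊τ / min τcom τsub⌋₊ := by
        apply Nat.le_floor
        rw [Nat.cast_one, le_div_iff₀ hm]
        linarith [not_lt.mp hc]
      omega
    rcases hmem i τ hτ0 hx with (h | h) | h
    · simp only [Set.mem_singleton_iff] at h
      subst h; exact Submodule.zero_mem _
    · rw [memloc, if_neg (not_le.mpr (lt_of_lt_of_le hτm (min_le_right _ _)))] at h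
      exact absurd h (Set.notMem_empty x)
    · rw [memcom, if_neg (not_le.mpr (lt_of_lt_of_le hτm (min_le_left _ _)))] at h
      exact absurd h (Set.notMem_empty x)
  | succ N ih =>
    intro k τ hτ0 hτk hfl i hi1 hin x hx
    have key : ∀ τc : ℝ, min τcom τsub ≤ τc → τc ≤ τ →
        ⌊(τ - τc) / min τcom τsub⌋₊ ≤ N := by
      intro τc h1 h2
      have h3 : (τ - τc) / min τcom τsub + 1 ≤ τ / min τcom τsub := by
        rw [le_div_iff₀ hm, add_mul, one_mul, div_mul_cancel₀ _ (ne_of_gt hm)]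
        linarith
      have h4 : ⌊(τ - τc) / min τcom τsub⌋₊ + 1 ≤ ⌊τ / min τcom τsub⌋₊ := by
        rw [← Nat.floor_add_one (div_nonneg (by linarith) hm.le)]
        exact Nat.floor_le_floor h3
      omega
    rcases hmem i τ hτ0 hx with (h | h) | h
    · simp only [Set.mem_singleton_iff] at h
      subst h; exact Submodule.zero_mem _
    · -- memloc
      rw [memloc] at h
      split_ifs at h with hts
      · have hτ'0 : (0 : ℝ) ≤ τ - τsub := by linarith
        have hτ'k : τ - τsub < ((k : ℝ) + 1) * τcom := by linarith
        have hfl' := key τsub (min_le_right _ _) hts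
        have IH := ih k (τ - τsub) hτ'0 hτ'k hfl' i hi1 hin
        refine Submodule.span_le.mpr ?_ h
        rintro y (hy | ⟨z, hz, rfl⟩)
        · exact IH hy
        · have hz' := IH hz
          by_cases h1 : i ≤ n / 3
          · have hc : cls n k i = 2 * (3 * k / n) + 2 := by
              rw [cls, if_pos (Or.inl h1)]
            rw [hc] at hz' ⊢
            exact oracle_mem_V1 h1 hz'
          · by_cases h2 : i ≤ 2 * n / 3
            · have hc : cls n k i = 2 * (3 * k / n) + 1 := by
                rw [cls, if_neg]
                rintro (hb | ⟨hb1, hb2⟩)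
                · exact h1 hb
                · exact absurd hb1 (not_lt.mpr h2)
              rw [hc] at hz' ⊢
              exact oracle_mem_V2 h1 h2 hz'
            · have : oracle d n a i z = 0 := by
                unfold oracle; rw [if_neg h1, if_neg h2]
              rw [this]
              exact Submodule.zero_mem _
      · exact absurd h (Set.notMem_empty x)
    · -- memcom
      rw [memcom] at h
      split_ifs at h with htc
      · set t := ⌊τ / τcom⌋₊ with htdef
        have ht1 : 1 ≤ t := by
          apply Nat.le_floor
          rw [Nat.cast_one, le_div_iff₀ hcom]
          linarith
        have htk : t ≤ k := by
          have hlt : t < k + 1 := by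
            rw [htdef]
            apply (Nat.floor_lt (div_nonneg hτ0 hcom.le)).mpr
            rw [div_lt_iff₀ hcom]
            push_cast
            linarith
          omega
        have hcast : ((t - 1 : ℕ) : ℝ) = (t : ℝ) - 1 := by
          push_cast [Nat.cast_sub ht1]
          ring
        have hτ'lt : τ - τcom < (((t - 1 : ℕ) : ℝ) + 1) * τcom := by
          rw [hcast]
          have hlf : τ / τcom < (t : ℝ) + 1 := Nat.lt_floor_add_one (τ / τcom)
          rw [div_lt_iff₀ hcom] at hlf
          ring_nf
          ring_nf at hlf
          linarith
        refine Submodule.span_le.mpr ?_ h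
        intro y hy
        simp only [Set.mem_iUnion] at hy
        obtain ⟨j, hj, hyj⟩ := hy
        obtain ⟨hj1, hjn, hedge⟩ := hj
        have hmemj := ih (t - 1) (τ - τcom) (by linarith) hτ'lt
          (key τcom (min_le_left _ _) htc) j hj1 hjn hyj
        refine Ksub_mono d ?_ hmemj
        have hcval : center n τcom τ = 2 * n / 3 + 1 + t % (n / 3) := rfl
        rw [hcval] at hedge
        exact cls_edge hn hn3 ht1 htk hedge
      · exact absurd h (Set.notMem_empty x)

theorem stmt9 (d n : ℕ) (hd : 3 ≤ d) (hodd : d % 2 = 1) (hn : 3 ≤ n) (hn3 : 3 ∣ n)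
    (a τcom τsub : ℝ) (ha : 0 < a) (hcom : 0 < τcom) (hsub : 0 < τsub)
    (mem : ℕ → ℝ → Set (EuclideanSpace ℝ (Fin d)))
    (hmem0 : ∀ i, mem i 0 = {0})
    (hmem : ∀ i τ, 0 ≤ τ →
      mem i τ ⊆ {0} ∪ memloc d τsub (oracle d n a) mem i τ ∪ memcom d n τcom mem i τ) :
    ∀ k < n * (d - 1) / 6, ∀ τ : ℝ, 0 ≤ τ → τ < ((k : ℝ) + 1) * τcom →
      ∀ i, 1 ≤ i → i ≤ n →
        ((i ≤ n / 3 ∨ (2 * n / 3 < i ∧ i ≤ 2 * n / 3 + k % (n / 3) + 1)) →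
          mem i τ ⊆ ↑(Ksub d (2 * (3 * k / n) + 2))) ∧
        (((n / 3 < i ∧ i ≤ 2 * n / 3) ∨ (2 * n / 3 + k % (n / 3) + 1 < i ∧ i ≤ n)) →
          mem i τ ⊆ ↑(Ksub d (2 * (3 * k / n) + 1))) := by
  intro k hk τ hτ0 hτlt i hi1 hin
  have H := main_lemma d n hn hn3 a τcom τsub hcom hsub mem hmem
    ⌊τ / min τcom τsub⌋₊ k τ hτ0 hτlt le_rfl i hi1 hin
  constructor
  · intro hcond
    have hc : cls n k i = 2 * (3 * k / n) + 2 := by rw [cls, if_pos hcond]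
    rwa [hc] at H
  · intro hcond
    have hne : ¬ (i ≤ n / 3 ∨ (2 * n / 3 < i ∧ i ≤ 2 * n / 3 + k % (n / 3) + 1)) := by
      generalize k % (n / 3) = q at hcond ⊢
      omega
    have hc : cls n k i = 2 * (3 * k / n) + 1 := by rw [cls, if_neg hne]
    rwa [hc] at H

end
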